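/- arXiv:1201.0606 — 6 statements merged into one kernel-verified Lean document; each statement's English description precedes it below -/
import Mathlib

section
/- Let (Ω, 𝔉, μ) be a probability space, let T : Ω → Ω be measurable, and let J : Ω → ℝ be measurable with 0 ≤ J ≤ M μ-almost everywhere for some constant M > 0, and with μ({ω : J(ω) = M}) = 0. Assume the change-of-variables identity ∫_Ω (f ∘ T)·J dμ = ∫_Ω f dμ holds for every measurable f : Ω → [0,∞]. Let θ > 0 and let f ∈ L¹(μ) with f ≥ 0 a.e. satisfy M^θ·f = J^θ·J·(f ∘ T) μ-almost everywhere. Then f = 0 μ-almost everywhere. -/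
open MeasureTheory

/-- Let `(Ω, 𝔉, μ)` be a probability space, `T : Ω → Ω` measurable, and `J : Ω → ℝ`
measurable with `0 ≤ J ≤ M` a.e. (`M > 0`) and `μ {J = M} = 0`. Assume the
change-of-variables identity `∫ (f ∘ T)·J dμ = ∫ f dμ` for every measurable
`f : Ω → [0,∞]`. If `θ > 0` and `f ∈ L¹(μ)` with `f ≥ 0` a.e. satisfies
`M^θ·f = J^θ·J·(f ∘ T)` a.e., then `f = 0` a.e. -/
theorem eigenfunction_eq_zero
    {Ω : Type*} [MeasurableSpace Ω] (μ : Measure Ω) [IsProbabilityMeasure μ]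
    (T : Ω → Ω) (hT : Measurable T)
    (J : Ω → ℝ) (hJmeas : Measurable J)
    (M : ℝ) (hM : 0 < M)
    (hJbd : ∀ᵐ ω ∂μ, 0 ≤ J ω ∧ J ω ≤ M)
    (hJM : μ {ω | J ω = M} = 0)
    (hcov : ∀ f : Ω → ENNReal, Measurable f →
      ∫⁻ ω, f (T ω) * ENNReal.ofReal (J ω) ∂μ = ∫⁻ ω, f ω ∂μ)
    (θ : ℝ) (hθ : 0 < θ)
    (f : Ω → ℝ) (hf : Integrable f μ) (hf0 : ∀ᵐ ω ∂μ, 0 ≤ f ω)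
    (heq : ∀ᵐ ω ∂μ, M ^ θ * f ω = J ω ^ θ * J ω * f (T ω)) :
    f =ᵐ[μ] 0 := by
  classical
  -- measurable representative of f
  set f' : Ω → ℝ := hf.1.mk f with hf'def
  have hf'm : Measurable f' := hf.1.stronglyMeasurable_mk.measurable
  have hff' : f =ᵐ[μ] f' := hf.1.ae_eq_mk
  -- a null measurable superset of {f ≠ f'}
  set N : Set Ω := toMeasurable μ {ω | f ω ≠ f' ω} with hNdef
  have hNmeas : MeasurableSet N := measurableSet_toMeasurable _ _
  have hNnull : μ N = 0 := by
    rw [hNdef, measure_toMeasurable]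
    exact hff'
  -- on T-preimage of N, J vanishes a.e.
  have hTN : ∀ᵐ ω ∂μ, T ω ∈ N → J ω ≤ 0 := by
    have hmeas : Measurable fun ω : Ω => N.indicator (fun _ => (1 : ENNReal)) ω :=
      measurable_const.indicator hNmeas
    have h0 : ∫⁻ ω, N.indicator (fun _ => (1 : ENNReal)) (T ω)
        * ENNReal.ofReal (J ω) ∂μ = 0 := by
      rw [hcov _ hmeas, lintegral_indicator hNmeas]
      simp [hNnull]
    have hzero := (lintegral_eq_zero_iff
      ((hmeas.comp hT).mul (ENNReal.measurable_ofReal.comp hJmeas))).mp h0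
    filter_upwards [hzero] with ω hω hTω
    have hω' : N.indicator (fun _ => (1 : ENNReal)) (T ω) * ENNReal.ofReal (J ω) = 0 := hω
    rw [Set.indicator_of_mem hTω, one_mul, ENNReal.ofReal_eq_zero] at hω'
    exact hω'
  -- ENNReal versions
  set A : Ω → ENNReal := fun ω => ENNReal.ofReal (f ω) with hAdef
  set e : Ω → ENNReal := fun ω => ENNReal.ofReal (J ω) with hedef
  set h : Ω → ENNReal := fun ω => ENNReal.ofReal (f' ω) with hhdef
  set X : Ω → ENNReal := fun ω => h (T ω) * e ω with hXdef
  have hem : Measurable e := ENNReal.measurable_ofReal.comp hJmeas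
  have hhm : Measurable h := ENNReal.measurable_ofReal.comp hf'm
  have hXm : Measurable X := (hhm.comp hT).mul hem
  have hAh : A =ᵐ[μ] h := hff'.mono fun ω hω => by simp [hAdef, hhdef, hω]
  -- key a.e. identity: e^θ * X = (ofReal M)^θ * A
  have K : ∀ᵐ ω ∂μ, e ω ^ θ * X ω = ENNReal.ofReal M ^ θ * A ω := by
    filter_upwards [hJbd, heq, hTN] with ω hb he hTNω
    rcases eq_or_lt_of_le hb.1 with hJ0 | hJpos
    · -- J ω = 0 : both sides vanish
      have hJ0 : J ω = 0 := hJ0.symm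
      have hf0' : f ω = 0 := by
        have : M ^ θ * f ω = 0 := by
          rw [he, hJ0, Real.zero_rpow hθ.ne']; ring
        have hMθ : (0:ℝ) < M ^ θ := Real.rpow_pos_of_pos hM θ
        exact by
          have := mul_eq_zero.mp this
          rcases this with h1 | h2
          · exact absurd h1 hMθ.ne'
          · exact h2
      simp [hXdef, hedef, hAdef, hJ0, hf0', ENNReal.zero_rpow_of_pos hθ]
    · -- J ω > 0, so T ω ∉ N, so f (T ω) = f' (T ω)
      have hTω : T ω ∉ N := fun hmem => absurd (hTNω hmem) (not_le.mpr hJpos)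
      have hfT : f (T ω) = f' (T ω) := by
        by_contra hc
        exact hTω (subset_toMeasurable μ _ hc)
      calc e ω ^ θ * X ω
          = ENNReal.ofReal (J ω ^ θ) * (ENNReal.ofReal (J ω) *
              ENNReal.ofReal (f' (T ω))) := by
            rw [hXdef, hedef, hhdef, ENNReal.ofReal_rpow_of_pos hJpos]; ring
        _ = ENNReal.ofReal (J ω ^ θ * J ω * f (T ω)) := by
            rw [hfT, ENNReal.ofReal_mul (by positivity : (0:ℝ) ≤ J ω ^ θ * J ω),
              ENNReal.ofReal_mul (Real.rpow_nonneg hb.1 θ)]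
            ring
        _ = ENNReal.ofReal (M ^ θ * f ω) := by rw [he]
        _ = ENNReal.ofReal M ^ θ * A ω := by
            rw [ENNReal.ofReal_mul (Real.rpow_nonneg hM.le θ),
              ENNReal.ofReal_rpow_of_pos hM, hAdef]
  -- integral facts
  have hAfin : ∫⁻ ω, A ω ∂μ < ⊤ := hf.lintegral_lt_top
  have hXint : ∫⁻ ω, X ω ∂μ = ∫⁻ ω, A ω ∂μ := by
    rw [hXdef]
    simp only [hXdef]
    rw [hcov h hhm]
    exact lintegral_congr_ae hAh.symm
  have hMθne : (ENNReal.ofReal M) ^ θ ≠ 0 := by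
    apply ne_of_gt
    exact ENNReal.rpow_pos (ENNReal.ofReal_pos.mpr hM) ENNReal.ofReal_ne_top
  have hMθtop : (ENNReal.ofReal M) ^ θ ≠ ⊤ :=
    ENNReal.rpow_ne_top_of_nonneg hθ.le ENNReal.ofReal_ne_top
  -- the two functions compared
  have hle : (fun ω => e ω ^ θ * X ω) ≤ᵐ[μ] fun ω => ENNReal.ofReal M ^ θ * X ω := by
    filter_upwards [hJbd] with ω hb
    exact mul_le_mul_left (ENNReal.rpow_le_rpow (ENNReal.ofReal_le_ofReal hb.2) hθ.le) _
  have hlhs : ∫⁻ ω, e ω ^ θ * X ω ∂μ = ENNReal.ofReal M ^ θ * ∫⁻ ω, A ω ∂μ := by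
    have hAae : AEMeasurable A μ := hhm.aemeasurable.congr hAh.symm
    rw [lintegral_congr_ae K, lintegral_const_mul'' _ hAae]
  have hrhs : ∫⁻ ω, ENNReal.ofReal M ^ θ * X ω ∂μ = ENNReal.ofReal M ^ θ * ∫⁻ ω, A ω ∂μ := by
    rw [lintegral_const_mul _ hXm, hXint]
  have hfin : ∫⁻ ω, e ω ^ θ * X ω ∂μ ≠ ⊤ := by
    rw [hlhs]
    exact ENNReal.mul_ne_top hMθtop hAfin.ne
  have heq2 : (fun ω => e ω ^ θ * X ω) =ᵐ[μ] fun ω => ENNReal.ofReal M ^ θ * X ω :=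
    ae_eq_of_ae_le_of_lintegral_le hle hfin
      ((hXm.const_mul _).aemeasurable) (le_of_eq (hrhs.trans hlhs.symm))
  -- a.e., J ≠ M
  have hJMne : ∀ᵐ ω ∂μ, J ω ≠ M := by
    rw [ae_iff]
    simpa using hJM
  -- conclude X = 0 a.e.
  have hX0 : ∀ᵐ ω ∂μ, X ω = 0 := by
    filter_upwards [heq2, hJMne, hJbd] with ω h2 hne hb
    by_contra hX
    have hXtop : X ω ≠ ⊤ := by
      rw [hXdef]
      exact ENNReal.mul_ne_top ENNReal.ofReal_ne_top ENNReal.ofReal_ne_top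
    have : e ω ^ θ = ENNReal.ofReal M ^ θ :=
      (ENNReal.mul_left_inj hX hXtop).mp h2
    have : e ω = ENNReal.ofReal M := ENNReal.rpow_left_injective hθ.ne' this
    have : J ω = M := by
      rwa [hedef, ENNReal.ofReal_eq_ofReal_iff hb.1 hM.le] at this
    exact hne this
  -- hence A = 0 a.e.
  have hA0 : ∀ᵐ ω ∂μ, A ω = 0 := by
    filter_upwards [K, hX0] with ω hK hX
    rw [hX, mul_zero] at hK
    exact (mul_eq_zero.mp hK.symm).resolve_left hMθne
  filter_upwards [hA0, hf0] with ω hA hpos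
  have : f ω ≤ 0 := ENNReal.ofReal_eq_zero.mp hA
  exact le_antisymm this hpos
end

section
/- Let l ≥ 1 be an integer, let E be a real normed vector space, and let S : ℝ^l → (linear isometries of E) be a map satisfying S(0) = Id and S(v+w) = S(v) ∘ S(w) for all v, w ∈ ℝ^l. Let f : ℝ^l → E satisfy the cocycle identity f(v + w) = f(v) + S(v)(f(w)) for all v, w ∈ ℝ^l. Suppose there is a real number t > 0 such that ‖f(λ·v)‖ = λ^t·‖f(v)‖ for all λ > 0 and all v ∈ ℝ^l, and suppose f is not identically zero. Then t ≤ 1. -/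
/-- Let `E` be a real normed vector space and `S : ℝ^l → (linear isometries of E)`
with `S(0) = Id` and `S(v+w) = S(v) ∘ S(w)`. Let `f : ℝ^l → E` satisfy the cocycle
identity `f(v+w) = f(v) + S(v)(f(w))`. If there is a real `t > 0` with
`‖f(λ·v)‖ = λ^t·‖f(v)‖` for all `λ > 0` and all `v`, and `f` is not identically zero,
then `t ≤ 1`. -/
theorem cocycle_growth_exponent_le_one (l : ℕ) (hl : 1 ≤ l)
    (E : Type*) [NormedAddCommGroup E] [NormedSpace ℝ E]
    (S : EuclideanSpace ℝ (Fin l) → (E →ₗᵢ[ℝ] E))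
    (hS0 : S 0 = LinearIsometry.id)
    (hSadd : ∀ v w : EuclideanSpace ℝ (Fin l), S (v + w) = (S v).comp (S w))
    (f : EuclideanSpace ℝ (Fin l) → E)
    (hcoc : ∀ v w : EuclideanSpace ℝ (Fin l), f (v + w) = f v + S v (f w))
    (t : ℝ) (ht : 0 < t)
    (hscale : ∀ lam : ℝ, 0 < lam → ∀ v : EuclideanSpace ℝ (Fin l),
      ‖f (lam • v)‖ = lam ^ t * ‖f v‖)
    (hne : ∃ v : EuclideanSpace ℝ (Fin l), f v ≠ 0) :
    t ≤ 1 := by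
  obtain ⟨v, hv⟩ := hne
  have hvpos : 0 < ‖f v‖ := norm_pos_iff.mpr hv
  have h2v : (2 : ℝ) • v = v + v := two_smul ℝ v
  have hle : ‖f ((2 : ℝ) • v)‖ ≤ 2 * ‖f v‖ := by
    rw [h2v, hcoc v v]
    calc ‖f v + S v (f v)‖ ≤ ‖f v‖ + ‖S v (f v)‖ := norm_add_le _ _
      _ = ‖f v‖ + ‖f v‖ := by rw [(S v).norm_map]
      _ = 2 * ‖f v‖ := by ring
  rw [hscale 2 (by norm_num) v] at hle
  have h2t : (2 : ℝ) ^ t ≤ (2 : ℝ) ^ (1 : ℝ) := by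
    rw [Real.rpow_one]
    exact le_of_mul_le_mul_right hle hvpos
  exact (Real.rpow_le_rpow_left_iff (by norm_num : (1:ℝ) < 2)).mp h2t
end

section
/- Let l ≥ 1 be an integer, let E be a real normed vector space, and let S : ℝ^l → (linear isometries of E) be a map satisfying S(0) = Id and S(v+w) = S(v) ∘ S(w) for all v, w ∈ ℝ^l. Let f : ℝ^l → E satisfy the cocycle identity f(v + w) = f(v) + S(v)(f(w)) for all v, w ∈ ℝ^l, and assume S(v)(f(v)) = f(v) for all v ∈ ℝ^l. Then S(w)(f(v)) = f(v) for all v, w ∈ ℝ^l, and consequently f is additive: f(v + w) = f(v) + f(w) for all v, w ∈ ℝ^l. -/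
/-- Let `E` be a real normed vector space and `S : ℝ^l → (linear isometries of E)`
with `S(0) = Id` and `S(v+w) = S(v) ∘ S(w)`. Let `f : ℝ^l → E` satisfy the cocycle
identity `f(v+w) = f(v) + S(v)(f(w))`, and assume `S(v)(f(v)) = f(v)` for all `v`.
Then `S(w)(f(v)) = f(v)` for all `v, w`, and consequently `f` is additive. -/
theorem cocycle_fixed_implies_additive (l : ℕ) (hl : 1 ≤ l)
    (E : Type*) [NormedAddCommGroup E] [NormedSpace ℝ E]
    (S : EuclideanSpace ℝ (Fin l) → (E →ₗᵢ[ℝ] E))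
    (hS0 : S 0 = LinearIsometry.id)
    (hSadd : ∀ v w : EuclideanSpace ℝ (Fin l), S (v + w) = (S v).comp (S w))
    (f : EuclideanSpace ℝ (Fin l) → E)
    (hcoc : ∀ v w : EuclideanSpace ℝ (Fin l), f (v + w) = f v + S v (f w))
    (hfix : ∀ v : EuclideanSpace ℝ (Fin l), S v (f v) = f v) :
    (∀ v w : EuclideanSpace ℝ (Fin l), S w (f v) = f v) ∧
    (∀ v w : EuclideanSpace ℝ (Fin l), f (v + w) = f v + f w) := by
  -- symmetry identity
  have hsym : ∀ v w : EuclideanSpace ℝ (Fin l),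
      S w (f v) - f v = S v (f w) - f w := by
    intro v w
    have h1 := hcoc v w
    have h2 := hcoc w v
    rw [add_comm v w] at h1
    rw [h1] at h2
    -- f w + S w (f v) = f v + S v (f w)
    have : f w + S w (f v) = f v + S v (f w) := h2.symm
    have := congrArg (fun x => x - f v - f w) this
    simpa [sub_sub, add_comm, add_left_comm, add_sub_cancel_left,
      sub_add_eq_sub_sub, add_sub_add_left_eq_sub] using
      sub_eq_sub_iff_add_eq_add.mpr (by linear_combination (norm := abel) this)
  -- S(n•v) fixes f v
  have hfixn : ∀ (n : ℕ) (v : EuclideanSpace ℝ (Fin l)), S (n • v) (f v) = f v := by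
    intro n v
    induction n with
    | zero => simp [hS0]
    | succ n ih =>
        have : ((n : ℕ) + 1) • v = n • v + v := by rw [add_smul, one_smul]
        rw [this, hSadd]
        simp only [LinearIsometry.coe_comp, Function.comp_apply, hfix, ih]
  -- f(n•v) = n • f v
  have hfn : ∀ (n : ℕ) (v : EuclideanSpace ℝ (Fin l)), f (n • v) = n • f v := by
    intro n v
    induction n with
    | zero =>
        have h := hcoc 0 0
        simp [hS0] at h
        simp [h]
    | succ n ih =>
        have : ((n : ℕ) + 1) • v = n • v + v := by rw [add_smul, one_smul]
        rw [this, hcoc, ih, hfixn, succ_nsmul]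
  -- main: S w (f v) = f v
  have hmain : ∀ v w : EuclideanSpace ℝ (Fin l), S w (f v) = f v := by
    intro v w
    have key : ∀ n : ℕ, (n : ℝ) * ‖S w (f v) - f v‖ ≤ 2 * ‖f w‖ := by
      intro n
      have h1 : S w (f (n • v)) - f (n • v) = n • (S w (f v) - f v) := by
        rw [hfn, smul_sub]
        congr 1
        rw [← Nat.cast_smul_eq_nsmul ℝ, (S w).map_smul, Nat.cast_smul_eq_nsmul]
      have h2 : S w (f (n • v)) - f (n • v) = S (n • v) (f w) - f w := hsym _ _
      have h3 : ‖S (n • v) (f w) - f w‖ ≤ 2 * ‖f w‖ := by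
        calc ‖S (n • v) (f w) - f w‖ ≤ ‖S (n • v) (f w)‖ + ‖f w‖ := norm_sub_le _ _
          _ = 2 * ‖f w‖ := by rw [(S (n • v)).norm_map]; ring
      calc (n : ℝ) * ‖S w (f v) - f v‖ = ‖n • (S w (f v) - f v)‖ := by
            rw [← Nat.cast_smul_eq_nsmul ℝ, norm_smul]; simp
        _ = ‖S (n • v) (f w) - f w‖ := by rw [← h1, h2]
        _ ≤ 2 * ‖f w‖ := h3
    have hz : ‖S w (f v) - f v‖ = 0 := by
      by_contra h
      have hpos : 0 < ‖S w (f v) - f v‖ := lt_of_le_of_ne (norm_nonneg _) (Ne.symm h)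
      obtain ⟨n, hn⟩ := exists_nat_gt ((2 * ‖f w‖) / ‖S w (f v) - f v‖)
      have := key n
      have : (n : ℝ) ≤ (2 * ‖f w‖) / ‖S w (f v) - f v‖ := (le_div_iff₀ hpos).mpr this
      linarith
    exact sub_eq_zero.mp (norm_eq_zero.mp hz)
  refine ⟨hmain, fun v w => ?_⟩
  rw [hcoc, hmain]
end

section
/- Let K be a compact topological group and let π be a continuous linear representation of K on a real Banach space V (each π(g) is a continuous linear automorphism of V and the action map K × V → V is continuous). Assume the only K-invariant vector is 0, i.e. V^K = {0}. Then for every v ∈ V, the smallest closed convex cone containing the orbit {π(g)(v) : g ∈ K} equals the smallest closed linear subspace containing this orbit (the closed K-cyclic subrepresentation generated by v); in particular −v belongs to the closed convex cone generated by the orbit of v. -/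
open MeasureTheory Set

theorem aux_neg_mem
    {K : Type*} [Group K] [TopologicalSpace K] [IsTopologicalGroup K] [CompactSpace K]
    {V : Type*} [NormedAddCommGroup V] [NormedSpace ℝ V] [CompleteSpace V]
    (ρ : K →* (V →L[ℝ] V))
    (hcont : Continuous fun p : K × V => ρ p.1 p.2)
    (hinv : ∀ v : V, (∀ g : K, ρ g v = v) → v = 0)
    (v : V) :
    -v ∈ closure {x : V | ∃ c : ℝ, 0 ≤ c ∧
        ∃ y ∈ convexHull ℝ (Set.range fun g : K => ρ g v), x = c • y} := by
  borelize K
  set S : Set V := {x : V | ∃ c : ℝ, 0 ≤ c ∧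
      ∃ y ∈ convexHull ℝ (Set.range fun g : K => ρ g v), x = c • y} with hS
  set K₀ : TopologicalSpace.PositiveCompacts K :=
    ⟨⟨Set.univ, isCompact_univ⟩, by simp⟩ with hK₀
  set μ := Measure.haarMeasure K₀ with hμ
  haveI : IsProbabilityMeasure μ := ⟨by
    have := Measure.haarMeasure_self (K₀ := K₀)
    simpa [hK₀] using this⟩
  have hf : Continuous fun g : K => ρ g v :=
    hcont.comp (continuous_id.prodMk continuous_const)
  have hfi : Integrable (fun g : K => ρ g v) μ :=
    hf.integrable_of_hasCompactSupport (HasCompactSupport.of_compactSpace _)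
  have hw : ∫ g, ρ g v ∂μ = 0 := by
    apply hinv
    intro h
    have h1 := (ρ h).integral_comp_comm hfi
    rw [← h1]
    have h2 : ∀ g : K, (ρ h) (ρ g v) = ρ (h * g) v := by
      intro g; rw [map_mul]; rfl
    simp_rw [h2]
    exact integral_mul_left_eq_self (fun g => ρ g v) h
  -- membership of scaled closure-hull points in closure S
  have hvmem : v ∈ convexHull ℝ (Set.range fun g : K => ρ g v) := by
    apply subset_convexHull
    exact ⟨1, by simp⟩
  have hscale : ∀ (c : ℝ), 0 ≤ c →
      ∀ y ∈ closure (convexHull ℝ (Set.range fun g : K => ρ g v)), c • y ∈ closure S := by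
    intro c hc y hy
    have himg : (fun z : V => c • z) '' (convexHull ℝ (Set.range fun g : K => ρ g v)) ⊆ S := by
      rintro _ ⟨z, hz, rfl⟩
      exact ⟨c, hc, z, hz, rfl⟩
    have : c • y ∈ (fun z : V => c • z) '' closure (convexHull ℝ (Set.range fun g : K => ρ g v)) :=
      ⟨y, hy, rfl⟩
    exact closure_mono himg
      (image_closure_subset_closure_image (continuous_const_smul c) this)
  rw [← closure_closure (s := S), Metric.mem_closure_iff]
  intro ε hε
  set U : Set K := {g : K | ‖ρ g v - v‖ < ε / 2} with hU
  have hUopen : IsOpen U := by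
    have : Continuous fun g : K => ‖ρ g v - v‖ := (hf.sub continuous_const).norm
    exact isOpen_lt this continuous_const
  have hUne : (1 : K) ∈ U := by simp [hU]; linarith
  have hUpos : 0 < μ U := hUopen.measure_pos μ ⟨1, hUne⟩
  have hUlt : μ U < ⊤ := lt_of_le_of_lt (measure_mono (subset_univ U)) (by simp)
  set a : ℝ := (μ U).toReal with ha
  have hapos : 0 < a := ENNReal.toReal_pos hUpos.ne' hUlt.ne
  have hUm : MeasurableSet U := hUopen.measurableSet
  -- candidate point
  set x : V := a⁻¹ • ∫ g in Uᶜ, ρ g v ∂μ with hx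
  have hxmem : x ∈ closure S := by
    rcases eq_or_ne (μ Uᶜ) 0 with h0 | h0
    · have : ∫ g in Uᶜ, ρ g v ∂μ = 0 := by
        rw [Measure.restrict_eq_zero.2 h0]; simp
      rw [hx, this, smul_zero]
      exact subset_closure ⟨0, le_rfl, v, hvmem, by simp⟩
    · set ν : Measure K := (μ Uᶜ)⁻¹ • μ.restrict Uᶜ with hν
      have hUclt : μ Uᶜ < ⊤ := lt_of_le_of_lt (measure_mono (subset_univ _)) (by simp)
      haveI : IsProbabilityMeasure ν := by
        constructor
        rw [hν]
        simp [Measure.restrict_apply_univ, ENNReal.inv_mul_cancel h0 hUclt.ne]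
      have hb : (0:ℝ) < (μ Uᶜ).toReal := ENNReal.toReal_pos h0 hUclt.ne
      have hint : (∫ g, ρ g v ∂ν) ∈ closure (convexHull ℝ (Set.range fun g : K => ρ g v)) := by
        apply Convex.integral_mem (convex_convexHull ℝ _).closure isClosed_closure
        · exact Filter.Eventually.of_forall fun g =>
            subset_closure (subset_convexHull ℝ _ ⟨g, rfl⟩)
        · rw [hν]
          exact (hfi.restrict.smul_measure (by simp [h0, hUclt.ne])).congr (by rfl)
      have hcalc : ∫ g in Uᶜ, ρ g v ∂μ = (μ Uᶜ).toReal • ∫ g, ρ g v ∂ν := by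
        rw [hν, integral_smul_measure, smul_smul, ENNReal.toReal_inv,
          mul_inv_cancel₀ hb.ne', one_smul]
      rw [hx, hcalc, smul_smul]
      exact hscale _ (by positivity) _ hint
  refine ⟨x, hxmem, ?_⟩
  -- distance estimate
  have hsplit : (∫ g in U, ρ g v ∂μ) + ∫ g in Uᶜ, ρ g v ∂μ = 0 := by
    rw [integral_add_compl hUm hfi, hw]
  have hxalt : x = -(a⁻¹ • ∫ g in U, ρ g v ∂μ) := by
    rw [hx, ← smul_neg]
    congr 1
    exact eq_neg_of_add_eq_zero_left (by rwa [add_comm] at hsplit)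
  have hconst : ∫ _ in U, v ∂μ = a • v := by
    rw [integral_const]
    simp [Measure.restrict_apply_univ, ha, Measure.real]
  have hbound : ‖(∫ g in U, ρ g v ∂μ) - a • v‖ ≤ (ε / 2) * a := by
    rw [← hconst, ← integral_sub hfi.restrict (integrable_const v)]
    have := norm_setIntegral_le_of_norm_le_const (μ := μ) (s := U) (C := ε / 2) hUlt
      (fun g hg => le_of_lt hg)
    simpa [mul_comm, Measure.real, ha] using this
  rw [dist_eq_norm, hxalt]
  have : -v - -(a⁻¹ • ∫ g in U, ρ g v ∂μ) = a⁻¹ • ((∫ g in U, ρ g v ∂μ) - a • v) := by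
    rw [smul_sub, smul_smul, inv_mul_cancel₀ hapos.ne', one_smul]
    abel
  rw [this, norm_smul]
  have hna : ‖(a:ℝ)⁻¹‖ = a⁻¹ := by
    rw [Real.norm_eq_abs]; exact abs_of_pos (by positivity)
  rw [hna]
  calc a⁻¹ * ‖(∫ g in U, ρ g v ∂μ) - a • v‖ ≤ a⁻¹ * ((ε / 2) * a) := by
        exact mul_le_mul_of_nonneg_left hbound (by positivity)
    _ = ε / 2 := by field_simp
    _ < ε := by linarith

/-- Let `K` be a compact topological group acting continuously and linearly on a real
Banach space `V` with `V^K = {0}`. Then for every `v ∈ V` the smallest closed convex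
cone containing the orbit `{ρ(g)(v) : g ∈ K}` (namely the closure of
`{c·y : c ≥ 0, y ∈ convexHull(orbit)}`) equals the smallest closed linear subspace
containing the orbit (the closed `K`-cyclic subrepresentation generated by `v`); in
particular `−v` belongs to the closed convex cone generated by the orbit of `v`. -/
theorem closedConvexCone_orbit_eq_closedSpan
    {K : Type*} [Group K] [TopologicalSpace K] [IsTopologicalGroup K] [CompactSpace K]
    {V : Type*} [NormedAddCommGroup V] [NormedSpace ℝ V] [CompleteSpace V]
    (ρ : K →* (V →L[ℝ] V))
    (hcont : Continuous fun p : K × V => ρ p.1 p.2)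
    (hinv : ∀ v : V, (∀ g : K, ρ g v = v) → v = 0)
    (v : V) :
    closure {x : V | ∃ c : ℝ, 0 ≤ c ∧
        ∃ y ∈ convexHull ℝ (Set.range fun g : K => ρ g v), x = c • y}
      = closure ((Submodule.span ℝ (Set.range fun g : K => ρ g v) : Submodule ℝ V) : Set V)
    ∧ -v ∈ closure {x : V | ∃ c : ℝ, 0 ≤ c ∧
        ∃ y ∈ convexHull ℝ (Set.range fun g : K => ρ g v), x = c • y} := by
  set S : Set V := {x : V | ∃ c : ℝ, 0 ≤ c ∧
      ∃ y ∈ convexHull ℝ (Set.range fun g : K => ρ g v), x = c • y} with hS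
  have hneg : -v ∈ closure S := aux_neg_mem ρ hcont hinv v
  refine ⟨?_, hneg⟩
  have hvmem : v ∈ convexHull ℝ (Set.range fun g : K => ρ g v) :=
    subset_convexHull ℝ _ ⟨1, by simp⟩
  -- S is closed under addition
  have hSadd : ∀ a ∈ S, ∀ b ∈ S, a + b ∈ S := by
    rintro _ ⟨c₁, hc₁, y₁, hy₁, rfl⟩ _ ⟨c₂, hc₂, y₂, hy₂, rfl⟩
    rcases eq_or_lt_of_le (by positivity : (0:ℝ) ≤ c₁ + c₂) with h | h
    · have hc10 : c₁ = 0 := by linarith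
      have hc20 : c₂ = 0 := by linarith
      refine ⟨0, le_rfl, v, hvmem, by simp [hc10, hc20]⟩
    · refine ⟨c₁ + c₂, le_of_lt h, (c₁ / (c₁ + c₂)) • y₁ + (c₂ / (c₁ + c₂)) • y₂, ?_, ?_⟩
      · exact (convex_convexHull ℝ _) hy₁ hy₂ (by positivity) (by positivity)
          (by field_simp)
      · rw [smul_add, smul_smul, smul_smul]
        field_simp
  have hCadd : ∀ a ∈ closure S, ∀ b ∈ closure S, a + b ∈ closure S := by
    intro a ha b hb
    exact map_mem_closure₂ continuous_add ha hb hSadd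
  -- closure S is closed under nonneg scalar multiplication
  have hCsmul : ∀ (c : ℝ), 0 ≤ c → ∀ x ∈ closure S, c • x ∈ closure S := by
    intro c hc x hx
    have himg : (fun z : V => c • z) '' S ⊆ S := by
      rintro _ ⟨_, ⟨c', hc', y, hy, rfl⟩, rfl⟩
      exact ⟨c * c', by positivity, y, hy, by simp [smul_smul]⟩
    exact closure_mono himg
      (image_closure_subset_closure_image (continuous_const_smul c) ⟨x, hx, rfl⟩)
  -- negatives of orbit points are in closure S
  have hnegOrbit : ∀ g₀ : K, -(ρ g₀ v) ∈ closure S := by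
    intro g₀
    have hrange : (Set.range fun g : K => ρ g (ρ g₀ v)) = Set.range fun g : K => ρ g v := by
      ext x
      constructor
      · rintro ⟨g, rfl⟩
        exact ⟨g * g₀, by show ρ (g * g₀) v = ρ g (ρ g₀ v); rw [map_mul]; rfl⟩
      · rintro ⟨g, rfl⟩
        refine ⟨g * g₀⁻¹, ?_⟩
        show ρ (g * g₀⁻¹) (ρ g₀ v) = ρ g v
        rw [← ContinuousLinearMap.mul_apply, ← map_mul, inv_mul_cancel_right]
    have := aux_neg_mem ρ hcont hinv (ρ g₀ v)
    rwa [hrange] at this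
  -- closure S is closed under negation
  have hCneg : ∀ x ∈ closure S, -x ∈ closure S := by
    have hhull : convexHull ℝ (Set.range fun g : K => ρ g v) ⊆
        {x : V | x ∈ closure S ∧ -x ∈ closure S} := by
      apply convexHull_min
      · rintro _ ⟨g, rfl⟩
        exact ⟨subset_closure ⟨1, zero_le_one, ρ g v,
          subset_convexHull ℝ _ ⟨g, rfl⟩, (one_smul ℝ _).symm⟩, hnegOrbit g⟩
      · rintro x ⟨hx, hx'⟩ y ⟨hy, hy'⟩ a b ha hb hab
        refine ⟨hCadd _ (hCsmul a ha _ hx) _ (hCsmul b hb _ hy), ?_⟩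
        have : -(a • x + b • y) = a • (-x) + b • (-y) := by
          rw [smul_neg, smul_neg]; abel
        rw [this]
        exact hCadd _ (hCsmul a ha _ hx') _ (hCsmul b hb _ hy')
    have hnegS : ∀ x ∈ S, -x ∈ closure S := by
      rintro _ ⟨c, hc, y, hy, rfl⟩
      have : -(c • y) = c • (-y) := (smul_neg c y).symm
      rw [this]
      exact hCsmul c hc _ (hhull hy).2
    intro x hx
    have h1 : -x ∈ closure (Neg.neg '' S) :=
      image_closure_subset_closure_image continuous_neg ⟨x, hx, rfl⟩
    have h2 : closure (Neg.neg '' S) ⊆ closure S := by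
      rw [← closure_closure (s := S)]
      apply closure_mono
      rintro _ ⟨z, hz, rfl⟩
      exact hnegS z hz
    exact h2 h1
  apply subset_antisymm
  · apply closure_mono
    rintro _ ⟨c, hc, y, hy, rfl⟩
    have hyspan : y ∈ Submodule.span ℝ (Set.range fun g : K => ρ g v) := by
      have := convexHull_min (Submodule.subset_span (R := ℝ))
        (Submodule.span ℝ (Set.range fun g : K => ρ g v)).convex
      exact this hy
    exact Submodule.smul_mem _ c hyspan
  · rw [← closure_closure (s := S)]
    apply closure_mono
    intro x hx
    induction hx using Submodule.span_induction with
    | mem x hxm =>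
        rcases hxm with ⟨g, rfl⟩
        exact subset_closure ⟨1, zero_le_one, ρ g v, subset_convexHull ℝ _ ⟨g, rfl⟩,
          (one_smul ℝ _).symm⟩
    | zero => exact subset_closure ⟨0, le_rfl, v, hvmem, by simp⟩
    | add a b _ _ ha hb => exact hCadd a ha b hb
    | smul a x _ hx =>
        rcases le_or_gt 0 a with h | h
        · exact hCsmul a h x hx
        · have : a • x = (-a) • (-x) := by rw [smul_neg, neg_smul, neg_neg]
          rw [this]
          exact hCsmul (-a) (by linarith) _ (hCneg x hx)
end

section
/- Let G be a topological group and let H be a real Hilbert space. Let α be a continuous action of G on H by affine isometries; write α(g)(x) = π(g)(x) + c(g), where π(g) is the linear part. Assume: (i) π is irreducible, i.e. the only closed π(G)-invariant linear subspaces of H are {0} and H; and (ii) there is a compact subgroup K ⊆ G such that the only π(K)-invariant vector is 0. Then every closed G-invariant convex subset C ⊆ H either equals H or contains no half-line, i.e. there are no x₀ ∈ H and w ∈ H with w ≠ 0 such that x₀ + s·w ∈ C for all s ≥ 0. -/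
open MeasureTheory

/-- Let `G` be a topological group acting continuously by affine isometries
`α(g)(x) = ρ(g)(x) + c(g)` on a real Hilbert space `H`, where the linear part `ρ` is a
homomorphism into the surjective linear isometries and `c` is the associated cocycle.
Assume (i) `ρ` is irreducible, and (ii) there is a compact subgroup `K ⊆ G` whose only
`ρ(K)`-invariant vector is `0`. Then every closed `G`-invariant convex subset `C ⊆ H`
either equals `H` or contains no half-line. -/
theorem invariant_convex_set_univ_or_no_halfline
    {G : Type*} [Group G] [TopologicalSpace G] [IsTopologicalGroup G]
    {H : Type*} [NormedAddCommGroup H] [InnerProductSpace ℝ H] [CompleteSpace H]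
    (ρ : G →* (H ≃ₗᵢ[ℝ] H)) (c : G → H)
    (hcoc : ∀ g h : G, c (g * h) = ρ g (c h) + c g)
    (hcont : Continuous fun p : G × H => ρ p.1 p.2 + c p.1)
    (hirr : ∀ W : Submodule ℝ H, IsClosed (W : Set H) →
      (∀ g : G, ∀ x ∈ W, ρ g x ∈ W) → W = ⊥ ∨ W = ⊤)
    (K : Subgroup G) (hK : IsCompact (K : Set G))
    (hKinv : ∀ v : H, (∀ g ∈ K, ρ g v = v) → v = 0)
    (C : Set H) (hCc : IsClosed C) (hCconv : Convex ℝ C)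
    (hCinv : ∀ g : G, ∀ x ∈ C, ρ g x + c g ∈ C) :
    C = Set.univ ∨ ¬ ∃ (x₀ w : H), w ≠ 0 ∧ ∀ s : ℝ, 0 ≤ s → x₀ + s • w ∈ C := by
  by_contra hcon
  push_neg at hcon
  obtain ⟨hCne, x₀, w, hw, hline⟩ := hcon
  obtain ⟨y, hy⟩ := (Set.ne_univ_iff_exists_notMem C).mp hCne
  obtain ⟨f, u, hfu, huy⟩ := geometric_hahn_banach_closed_point hCconv hCc hy
  -- continuity of the cocycle and orbit maps
  have hc : Continuous c := by
    have h1 : Continuous fun g : G => ρ g (0 : H) + c g :=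
      hcont.comp (continuous_id.prodMk continuous_const)
    simpa using h1
  have horb : ∀ v : H, Continuous fun g : G => ρ g v := by
    intro v
    have h1 : Continuous fun g : G => ρ g v + c g :=
      hcont.comp (continuous_id.prodMk continuous_const)
    have h2 : (fun g : G => ρ g v) = fun g => (ρ g v + c g) - c g := by
      funext g; abel
    rw [h2]
    exact h1.sub hc
  -- half-lines in all directions ρ g w
  have hhl : ∀ g : G, ∀ s : ℝ, 0 ≤ s → ρ g x₀ + s • ρ g w + c g ∈ C := by
    intro g s hs
    have h1 := hCinv g _ (hline s hs)
    simpa [map_add, _root_.map_smul] using h1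
  -- f is nonpositive on all directions ρ g w
  have hle : ∀ g : G, f (ρ g w) ≤ 0 := by
    intro g
    by_contra hpos
    push_neg at hpos
    set t := f (ρ g w) with ht
    set A := f (ρ g x₀) + f (c g) with hA
    have hval : ∀ s : ℝ, 0 ≤ s → A + s * t < u := by
      intro s hs
      have h1 := hfu _ (hhl g s hs)
      rw [map_add, map_add, _root_.map_smul] at h1
      simp only [smul_eq_mul] at h1
      linarith [h1]
    have hAu : A < u := by simpa using hval 0 le_rfl
    have hs0 : (0:ℝ) ≤ (u - A) / t := div_nonneg (by linarith) hpos.le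
    have h2 := hval _ hs0
    rw [div_mul_cancel₀ _ (ne_of_gt hpos)] at h2
    linarith
  -- Haar measure on K
  haveI : CompactSpace K := isCompact_iff_compactSpace.mp hK
  letI : MeasurableSpace K := borel K
  haveI : BorelSpace K := ⟨rfl⟩
  set μ : Measure K := Measure.haar with hμ
  -- f vanishes on all directions ρ g w, by averaging over K
  have hzero : ∀ g : G, f (ρ g w) = 0 := by
    intro g
    set F : K → H := fun k => ρ ((k : G) * g) w with hF
    have hFc : Continuous F := by
      have : Continuous fun k : K => ((k : G) * g) :=
        continuous_subtype_val.mul continuous_const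
      exact (horb w).comp this
    have hFsupp : HasCompactSupport F :=
      isCompact_univ.of_isClosed_subset (isClosed_tsupport F) (Set.subset_univ _)
    have hFi : Integrable F μ := hFc.integrable_of_hasCompactSupport hFsupp
    set v : H := ∫ k, F k ∂μ with hv
    have hinv : ∀ k₀ : G, k₀ ∈ K → ρ k₀ v = v := by
      intro k₀ hk₀
      have h2 : (fun k : K => ρ k₀ (F k)) = fun k : K => F ((⟨k₀, hk₀⟩ : K) * k) := by
        funext k
        simp only [hF, Subgroup.coe_mul, mul_assoc, map_mul ρ]
        rfl
      have h1 : ρ k₀ v = ∫ k, ρ k₀ (F k) ∂μ := by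
        have h3 := (ρ k₀).toLinearIsometry.integral_comp_comm (μ := μ) F
        simpa using h3.symm
      rw [h1, h2, integral_mul_left_eq_self (fun k : K => F k) (⟨k₀, hk₀⟩ : K)]
    have hv0 : v = 0 := hKinv v hinv
    have hint : ∫ k, f (F k) ∂μ = 0 := by
      rw [f.integral_comp_comm hFi, ← hv, hv0, map_zero]
    have hnn : 0 ≤ fun k : K => -f (F k) := by
      intro k
      simp only [Pi.zero_apply, neg_nonneg]
      exact hle _
    have hik : Integrable (fun k : K => -f (F k)) μ := by
      have hcnt : Continuous fun k : K => -f (F k) := (f.continuous.comp hFc).neg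
      have hsupp : HasCompactSupport fun k : K => -f (F k) :=
        isCompact_univ.of_isClosed_subset (isClosed_tsupport _) (Set.subset_univ _)
      exact hcnt.integrable_of_hasCompactSupport hsupp
    have hae : (fun k : K => -f (F k)) =ᵐ[μ] 0 := by
      rw [← integral_eq_zero_iff_of_nonneg hnn hik, integral_neg, hint, neg_zero]
    have heq : (fun k : K => -f (F k)) = 0 :=
      (Continuous.ae_eq_iff_eq μ (f.continuous.comp hFc).neg continuous_const).mp hae
    have h3 := congrFun heq ⟨1, K.one_mem⟩
    simp only [hF, OneMemClass.coe_one, one_mul, Pi.zero_apply, neg_eq_zero] at h3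
    exact h3
  -- the closed span of the orbit directions is invariant, hence everything
  set S : Set H := Set.range fun g : G => ρ g w with hS
  set W : Submodule ℝ H := (Submodule.span ℝ S).topologicalClosure with hWdef
  have hWc : IsClosed (W : Set H) := Submodule.isClosed_topologicalClosure _
  have hWinv : ∀ g : G, ∀ x ∈ W, ρ g x ∈ W := by
    intro g x hx
    have hmap : Set.MapsTo (ρ g) (Submodule.span ℝ S : Set H) (Submodule.span ℝ S : Set H) := by
      intro z hz
      have himg : (Submodule.span ℝ S).map ((ρ g).toLinearEquiv : H →ₗ[ℝ] H)
          ≤ Submodule.span ℝ S := by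
        rw [Submodule.map_span]
        apply Submodule.span_le.mpr
        rintro _ ⟨_, ⟨g', rfl⟩, rfl⟩
        apply Submodule.subset_span
        exact ⟨g * g', by simp [map_mul ρ]⟩
      exact himg ⟨z, hz, rfl⟩
    have hcl : Set.MapsTo (ρ g) (closure (Submodule.span ℝ S : Set H))
        (closure (Submodule.span ℝ S : Set H)) := hmap.closure (ρ g).continuous
    have hx' : x ∈ closure (Submodule.span ℝ S : Set H) := by
      rwa [← Submodule.topologicalClosure_coe]
    have h4 := hcl hx'
    rwa [← SetLike.mem_coe, Submodule.topologicalClosure_coe]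
  have hWtop : W = ⊤ := by
    rcases hirr W hWc hWinv with hbot | htop
    · exfalso
      apply hw
      have hwW : w ∈ W := by
        apply Submodule.le_topologicalClosure
        apply Submodule.subset_span
        exact ⟨1, by simp⟩
      rw [hbot] at hwW
      simpa using hwW
    · exact htop
  -- f vanishes on W = ⊤, contradiction
  have hker : W ≤ LinearMap.ker (f : H →ₗ[ℝ] ℝ) := by
    apply Submodule.topologicalClosure_minimal
    · apply Submodule.span_le.mpr
      rintro _ ⟨g, rfl⟩
      simpa using hzero g
    · exact ContinuousLinearMap.isClosed_ker f
  have hf0 : ∀ x : H, f x = 0 := by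
    intro x
    have : x ∈ W := hWtop ▸ Submodule.mem_top
    exact hker this
  have h1 : (0:ℝ) < u := by
    have := hfu x₀ (by simpa using hline 0 le_rfl)
    rwa [hf0 x₀] at this
  have h2 : u < 0 := by rw [← hf0 y]; exact huy
  linarith
end

section
/- Let H be a real Hilbert space, let U : H → H be a surjective linear isometry, let b ∈ H, and let α : H → H be the affine isometry α(x) = U(x) + b. Assume the displacement of α is bounded away from zero: inf_{x ∈ H} ‖α(x) − x‖ > 0. Then the sequence of ergodic averages (1/n)·∑_{j=0}^{n-1} U^j(b) converges in H, and its limit is a nonzero vector (namely the orthogonal projection of b onto the subspace of U-fixed vectors). -/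
open Filter

lemma liequiv_coe_pow {H : Type*} [NormedAddCommGroup H] [InnerProductSpace ℝ H]
    (U : H ≃ₗᵢ[ℝ] H) (n : ℕ) : ⇑(U ^ n) = (⇑U)^[n] := by
  induction n with
  | zero => rfl
  | succ n ih => rw [pow_succ, Function.iterate_succ]; ext x; simp [ih]

/-- Let `H` be a real Hilbert space, `U` a surjective linear isometry of `H`,
and `α(x) = U(x) + b` the associated affine isometry. If the displacement of `α` is
bounded away from zero, i.e. `inf_x ‖α(x) − x‖ > 0`, then the ergodic averages
`(1/n)·∑_{j<n} U^j(b)` converge in `H` to a nonzero vector, namely the orthogonal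
projection of `b` onto the subspace of `U`-fixed vectors (characterized by being
`U`-fixed with `b − L` orthogonal to every `U`-fixed vector). -/
theorem ergodic_average_tendsto_nonzero
    {H : Type*} [NormedAddCommGroup H] [InnerProductSpace ℝ H] [CompleteSpace H]
    (U : H ≃ₗᵢ[ℝ] H) (b : H)
    (hdisp : 0 < ⨅ x : H, ‖U x + b - x‖) :
    ∃ L : H,
      Tendsto (fun n : ℕ => (n : ℝ)⁻¹ • ∑ j ∈ Finset.range n, (U ^ j) b)
        atTop (nhds L) ∧
      L ≠ 0 ∧ U L = L ∧ ∀ y : H, U y = y → (inner ℝ (b - L) y : ℝ) = 0 := by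
  set f : H →L[ℝ] H := U.toLinearIsometry.toContinuousLinearMap with hf_def
  have hfapp : ∀ x, f x = U x := fun x => rfl
  have hf : ‖f‖ ≤ 1 := by
    apply ContinuousLinearMap.opNorm_le_bound _ zero_le_one
    intro x
    simp [hfapp, U.norm_map]
  set S : Submodule ℝ H := LinearMap.eqLocus (f : H →ₗ[ℝ] H) ((1 : H →L[ℝ] H) : H →ₗ[ℝ] H) with hS_def
  have hSmem : ∀ x : H, x ∈ S ↔ U x = x := fun x => Iff.rfl
  set L : H := (S.orthogonalProjectionOnto b : H) with hL_def
  have hLS : L ∈ S := (S.orthogonalProjectionOnto b).2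
  have hbL : b - L ∈ Sᗮ := S.sub_starProjection_mem_orthogonal b
  refine ⟨L, ?_, ?_, hLS, fun y hy => by rw [real_inner_comm]; exact hbL y hy⟩
  · have := f.tendsto_birkhoffAverage_orthogonalProjection (𝕜 := ℝ) hf b
    have heq : (fun n : ℕ => (n : ℝ)⁻¹ • ∑ j ∈ Finset.range n, (U ^ j) b)
        = fun n : ℕ => birkhoffAverage ℝ f _root_.id n b := by
      funext n
      simp only [birkhoffAverage, birkhoffSum, _root_.id]
      congr 1
      refine Finset.sum_congr rfl fun j _ => ?_
      rw [liequiv_coe_pow]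
      rfl
    rw [heq]
    exact this
  · -- L ≠ 0
    intro hL0
    -- b ∈ Sᗮ
    have hbS : b ∈ Sᗮ := by simpa [hL0] using hbL
    -- Sᗮ ⊆ closure of the range of f - 1
    set T : Submodule ℝ H := LinearMap.range ((f : H →ₗ[ℝ] H) - 1) with hT_def
    have hTS : Tᗮ ≤ S := by
      intro x hx
      have hinner : ∀ y, (inner ℝ (f y) x : ℝ) = inner ℝ y x := by
        intro y
        have := hx _ (LinearMap.mem_range_self ((f : H →ₗ[ℝ] H) - 1) y)
        simpa [inner_sub_left, sub_eq_zero] using this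
      refine eq_of_norm_le_re_inner_eq_norm_sq (𝕜 := ℝ) ?_ ?_
      · simpa using f.le_of_opNorm_le hf x
      · simp [hinner, ← @norm_sq_eq_re_inner ℝ]
    have hST : Sᗮ ≤ T.topologicalClosure := by
      rw [← Submodule.orthogonal_orthogonal_eq_closure]
      exact Submodule.orthogonal_le hTS
    have hb_closure : b ∈ closure (T : Set H) := hST hbS
    -- derive a contradiction with hdisp
    obtain ⟨v, hvT, hv⟩ := Metric.mem_closure_iff.1 hb_closure _ hdisp
    obtain ⟨y, rfl⟩ := hvT
    have key : ‖U (-y) + b - (-y)‖ < ⨅ x : H, ‖U x + b - x‖ := by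
      have : U (-y) + b - (-y) = b - (f y - y) := by
        simp [hfapp]; abel
      rw [this]
      simpa [dist_eq_norm] using hv
    have hle : (⨅ x : H, ‖U x + b - x‖) ≤ ‖U (-y) + b - (-y)‖ :=
      ciInf_le ⟨0, fun z ⟨x, hx⟩ => hx ▸ norm_nonneg _⟩ (-y)
    exact absurd (hle.trans_lt key) (lt_irrefl _)
end
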